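/- The function $C(s,t) = \min(s,t) - st - \varphi(\Phi^{-1}(s))\,\varphi(\Phi^{-1}(t)) - \tfrac{1}{2} \Phi^{-1}(s)\,\varphi(\Phi^{-1}(s))\,\Phi^{-1}(t)\,\varphi(\Phi^{-1}(t))$, defined for $s, t \in (0,1)$, is symmetric: $C(s,t) = C(t,s)$, and satisfies $C(t,t) = t(1-t) - \varphi(\Phi^{-1}(t))^2 - \tfrac{1}{2}\left(\Phi^{-1}(t)\,\varphi(\Phi^{-1}(t))\right)^2 \ge 0$ for all $t \in (0,1)$. -/

import Mathlib

open MeasureTheory ProbabilityTheory Set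

/-- The standard normal distribution function. -/
noncomputable def stdNormalCDF (x : ℝ) : ℝ := ((gaussianReal 0 1) (Set.Iic x)).toReal

/-- The standard normal quantile function `Φ⁻¹`. -/
noncomputable def stdNormalQuantile : ℝ → ℝ := Function.invFun stdNormalCDF

/-- The standard normal density `φ`. -/
noncomputable def stdNormalPDF (x : ℝ) : ℝ := gaussianPDFReal 0 1 x

/-- The covariance function of Durbin's limiting Gaussian process for testing
normality with estimated mean and variance. -/
noncomputable def durbinCov (s t : ℝ) : ℝ :=
  min s t - s * t - stdNormalPDF (stdNormalQuantile s) * stdNormalPDF (stdNormalQuantile t) -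
    (1 / 2) * stdNormalQuantile s * stdNormalPDF (stdNormalQuantile s) *
      stdNormalQuantile t * stdNormalPDF (stdNormalQuantile t)

namespace DurbinAux

open Filter Real Topology

lemma pdf_eq (x : ℝ) :
    stdNormalPDF x = (Real.sqrt (2 * Real.pi))⁻¹ * Real.exp (-(1/2) * x ^ 2) := by
  simp only [stdNormalPDF, gaussianPDFReal, NNReal.coe_one, mul_one, sub_zero]
  ring_nf

lemma pdf_nonneg (x : ℝ) : 0 ≤ stdNormalPDF x := gaussianPDFReal_nonneg _ _ _

lemma integrable_pdf : Integrable stdNormalPDF := integrable_gaussianPDFReal 0 1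

lemma hasDerivAt_pdf (x : ℝ) : HasDerivAt stdNormalPDF (-x * stdNormalPDF x) x := by
  have h1 : HasDerivAt (fun y : ℝ => -(1/2) * y ^ 2) (-x) x := by
    have := (hasDerivAt_pow 2 x).const_mul (-(1/2) : ℝ)
    refine this.congr_deriv ?_
    push_cast
    ring
  have h2 := (Real.hasDerivAt_exp (-(1/2) * x ^ 2)).comp x h1
  have h3 := h2.const_mul ((Real.sqrt (2 * Real.pi))⁻¹)
  have hfun : stdNormalPDF = fun y : ℝ =>
      (Real.sqrt (2 * Real.pi))⁻¹ * Real.exp (-(1/2) * y ^ 2) := funext pdf_eq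
  rw [hfun]
  refine h3.congr_deriv ?_
  beta_reduce
  ring

lemma integrable_pow_pdf (n : ℕ) : Integrable (fun u : ℝ => u ^ n * stdNormalPDF u) := by
  have hs : (-1 : ℝ) < (n : ℝ) := lt_of_lt_of_le (by norm_num) (Nat.cast_nonneg n)
  have base := integrable_rpow_mul_exp_neg_mul_sq (by norm_num : (0:ℝ) < 1/2) hs
  simp_rw [Real.rpow_natCast] at base
  refine (base.const_mul ((Real.sqrt (2 * Real.pi))⁻¹)).congr (ae_of_all _ fun u => ?_)
  simp only [pdf_eq]
  ring

lemma tendsto_pow_exp_atTop (n : ℕ) :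
    Tendsto (fun u : ℝ => u ^ n * Real.exp (-(1/2) * u ^ 2)) atTop (𝓝 0) := by
  have h := rpow_mul_exp_neg_mul_sq_isLittleO_exp_neg (by norm_num : (0:ℝ) < 1/2) (n : ℝ)
  simp_rw [Real.rpow_natCast] at h
  have h2 : Tendsto (fun x : ℝ => Real.exp (-(1/2) * x)) atTop (𝓝 0) := by
    apply Real.tendsto_exp_atBot.comp
    exact Tendsto.const_mul_atTop_of_neg (by norm_num : (-(1/2):ℝ) < 0) tendsto_id
  exact h.tendsto_zero_of_tendsto h2

lemma tendsto_pow_exp_atBot (n : ℕ) :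
    Tendsto (fun u : ℝ => u ^ n * Real.exp (-(1/2) * u ^ 2)) atBot (𝓝 0) := by
  have h := ((tendsto_pow_exp_atTop n).const_mul ((-1:ℝ) ^ n)).comp tendsto_neg_atBot_atTop
  simp only [mul_zero] at h
  refine h.congr fun u => ?_
  simp only [Function.comp]
  rw [neg_sq, ← mul_assoc, ← mul_pow]
  norm_num

lemma tendsto_pow_pdf_atTop (n : ℕ) :
    Tendsto (fun u : ℝ => u ^ n * stdNormalPDF u) atTop (𝓝 0) := by
  have h := (tendsto_pow_exp_atTop n).const_mul ((Real.sqrt (2 * Real.pi))⁻¹)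
  simp only [mul_zero] at h
  refine h.congr fun u => ?_
  rw [pdf_eq]
  ring

lemma tendsto_pow_pdf_atBot (n : ℕ) :
    Tendsto (fun u : ℝ => u ^ n * stdNormalPDF u) atBot (𝓝 0) := by
  have h := (tendsto_pow_exp_atBot n).const_mul ((Real.sqrt (2 * Real.pi))⁻¹)
  simp only [mul_zero] at h
  refine h.congr fun u => ?_
  rw [pdf_eq]
  ring

/-! Antiderivatives -/

lemma hasDerivAt_F1 (u : ℝ) :
    HasDerivAt (fun y : ℝ => -stdNormalPDF y) (u * stdNormalPDF u) u := by
  have := (hasDerivAt_pdf u).neg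
  refine this.congr_deriv ?_
  ring

lemma hasDerivAt_F2 (u : ℝ) :
    HasDerivAt (fun y : ℝ => -(y * stdNormalPDF y)) ((u ^ 2 - 1) * stdNormalPDF u) u := by
  have := ((hasDerivAt_id u).mul (hasDerivAt_pdf u)).neg
  refine this.congr_deriv ?_
  simp only [id]
  ring

lemma hasDerivAt_F3 (u : ℝ) :
    HasDerivAt (fun y : ℝ => -((y ^ 2 + 2) * stdNormalPDF y)) (u ^ 3 * stdNormalPDF u) u := by
  have hpoly : HasDerivAt (fun y : ℝ => y ^ 2 + 2) (2 * u) u := by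
    simpa using (hasDerivAt_pow 2 u).add_const (2:ℝ)
  have := (hpoly.mul (hasDerivAt_pdf u)).neg
  refine this.congr_deriv ?_
  ring

lemma hasDerivAt_F4 (u : ℝ) :
    HasDerivAt (fun y : ℝ => -((y ^ 3 + 3 * y) * stdNormalPDF y))
      ((u ^ 4 - 3) * stdNormalPDF u) u := by
  have hpoly : HasDerivAt (fun y : ℝ => y ^ 3 + 3 * y) (3 * u ^ 2 + 3) u := by
    have h1 := (hasDerivAt_pow 3 u).add ((hasDerivAt_id u).const_mul (3:ℝ))
    have h2 : ((3:ℕ):ℝ) * u ^ (3-1) + 3 * 1 = 3 * u ^ 2 + 3 := by push_cast; ring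
    rw [← h2]
    exact h1
  have := (hpoly.mul (hasDerivAt_pdf u)).neg
  refine this.congr_deriv ?_
  ring

/-! Integrability of the integrands -/

lemma int1 : Integrable (fun u : ℝ => u * stdNormalPDF u) := by
  simpa using integrable_pow_pdf 1

lemma int2 : Integrable (fun u : ℝ => (u ^ 2 - 1) * stdNormalPDF u) := by
  refine ((integrable_pow_pdf 2).sub integrable_pdf).congr (ae_of_all _ fun u => ?_)
  simp only [Pi.sub_apply]
  ring

lemma int4 : Integrable (fun u : ℝ => (u ^ 4 - 3) * stdNormalPDF u) := by
  refine ((integrable_pow_pdf 4).sub (integrable_pdf.const_mul 3)).congr (ae_of_all _ fun u => ?_)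
  simp only [Pi.sub_apply]
  ring

/-! Iic moments -/

lemma I0 (x : ℝ) : ∫ u in Iic x, stdNormalPDF u = stdNormalCDF x := by
  rw [stdNormalCDF, gaussianReal_apply_eq_integral 0 one_ne_zero,
    ENNReal.toReal_ofReal
      (setIntegral_nonneg measurableSet_Iic fun u _ => gaussianPDFReal_nonneg 0 1 u)]
  rfl

lemma I1 (x : ℝ) : ∫ u in Iic x, u * stdNormalPDF u = -stdNormalPDF x := by
  have h := integral_Iic_of_hasDerivAt_of_tendsto' (a := x)
    (fun u _ => hasDerivAt_F1 u) int1.integrableOn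
    (by simpa using (tendsto_pow_pdf_atBot 0).neg)
  simpa using h

lemma K2a (x : ℝ) : ∫ u in Iic x, (u ^ 2 - 1) * stdNormalPDF u = -(x * stdNormalPDF x) := by
  have h := integral_Iic_of_hasDerivAt_of_tendsto' (a := x)
    (fun u _ => hasDerivAt_F2 u) int2.integrableOn
    (by simpa using (tendsto_pow_pdf_atBot 1).neg)
  simpa using h

lemma I3 (x : ℝ) : ∫ u in Iic x, u ^ 3 * stdNormalPDF u = -((x ^ 2 + 2) * stdNormalPDF x) := by
  have htd : Tendsto (fun y : ℝ => -((y ^ 2 + 2) * stdNormalPDF y)) atBot (𝓝 0) := by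
    have := ((tendsto_pow_pdf_atBot 2).add ((tendsto_pow_pdf_atBot 0).const_mul 2)).neg
    simp only [mul_zero, add_zero, zero_add, neg_zero] at this
    refine this.congr fun u => ?_
    ring
  have h := integral_Iic_of_hasDerivAt_of_tendsto' (a := x)
    (fun u _ => hasDerivAt_F3 u) (integrable_pow_pdf 3).integrableOn htd
  simpa using h

lemma K4a (x : ℝ) : ∫ u in Iic x, (u ^ 4 - 3) * stdNormalPDF u
    = -((x ^ 3 + 3 * x) * stdNormalPDF x) := by
  have htd : Tendsto (fun y : ℝ => -((y ^ 3 + 3 * y) * stdNormalPDF y)) atBot (𝓝 0) := by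
    have := ((tendsto_pow_pdf_atBot 3).add ((tendsto_pow_pdf_atBot 1).const_mul 3)).neg
    simp only [mul_zero, add_zero, zero_add, neg_zero] at this
    refine this.congr fun u => ?_
    ring
  have h := integral_Iic_of_hasDerivAt_of_tendsto' (a := x)
    (fun u _ => hasDerivAt_F4 u) int4.integrableOn htd
  simpa using h

lemma I2 (x : ℝ) : ∫ u in Iic x, u ^ 2 * stdNormalPDF u
    = stdNormalCDF x - x * stdNormalPDF x := by
  have he : (fun u : ℝ => u ^ 2 * stdNormalPDF u)
      = fun u => (u ^ 2 - 1) * stdNormalPDF u + stdNormalPDF u := by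
    funext u; ring
  rw [he, integral_add int2.integrableOn integrable_pdf.integrableOn, K2a, I0]
  ring

lemma I4 (x : ℝ) : ∫ u in Iic x, u ^ 4 * stdNormalPDF u
    = 3 * stdNormalCDF x - (x ^ 3 + 3 * x) * stdNormalPDF x := by
  have he : (fun u : ℝ => u ^ 4 * stdNormalPDF u)
      = fun u => (u ^ 4 - 3) * stdNormalPDF u + 3 * stdNormalPDF u := by
    funext u; ring
  rw [he, integral_add int4.integrableOn (integrable_pdf.const_mul 3).integrableOn, K4a,
    integral_const_mul _ _, I0]
  ring

/-! Ioi moments (via FTC at `+∞`) -/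

lemma K1b (x : ℝ) : ∫ u in Ioi x, u * stdNormalPDF u = stdNormalPDF x := by
  have h := integral_Ioi_of_hasDerivAt_of_tendsto' (a := x)
    (fun u _ => hasDerivAt_F1 u) int1.integrableOn
    (by simpa using (tendsto_pow_pdf_atTop 0).neg)
  simpa using h

lemma K2b (x : ℝ) : ∫ u in Ioi x, (u ^ 2 - 1) * stdNormalPDF u = x * stdNormalPDF x := by
  have h := integral_Ioi_of_hasDerivAt_of_tendsto' (a := x)
    (fun u _ => hasDerivAt_F2 u) int2.integrableOn
    (by simpa using (tendsto_pow_pdf_atTop 1).neg)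
  simpa using h

lemma K3b (x : ℝ) : ∫ u in Ioi x, u ^ 3 * stdNormalPDF u = (x ^ 2 + 2) * stdNormalPDF x := by
  have htd : Tendsto (fun y : ℝ => -((y ^ 2 + 2) * stdNormalPDF y)) atTop (𝓝 0) := by
    have := ((tendsto_pow_pdf_atTop 2).add ((tendsto_pow_pdf_atTop 0).const_mul 2)).neg
    simp only [mul_zero, add_zero, zero_add, neg_zero] at this
    refine this.congr fun u => ?_
    ring
  have h := integral_Ioi_of_hasDerivAt_of_tendsto' (a := x)
    (fun u _ => hasDerivAt_F3 u) (integrable_pow_pdf 3).integrableOn htd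
  simpa using h

lemma K4b (x : ℝ) : ∫ u in Ioi x, (u ^ 4 - 3) * stdNormalPDF u
    = (x ^ 3 + 3 * x) * stdNormalPDF x := by
  have htd : Tendsto (fun y : ℝ => -((y ^ 3 + 3 * y) * stdNormalPDF y)) atTop (𝓝 0) := by
    have := ((tendsto_pow_pdf_atTop 3).add ((tendsto_pow_pdf_atTop 1).const_mul 3)).neg
    simp only [mul_zero, add_zero, zero_add, neg_zero] at this
    refine this.congr fun u => ?_
    ring
  have h := integral_Ioi_of_hasDerivAt_of_tendsto' (a := x)
    (fun u _ => hasDerivAt_F4 u) int4.integrableOn htd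
  simpa using h

/-! Full-line moments -/

lemma J0 : ∫ u, stdNormalPDF u = 1 := integral_gaussianPDFReal_eq_one 0 one_ne_zero

lemma J1 : ∫ u : ℝ, u * stdNormalPDF u = 0 := by
  rw [← intervalIntegral.integral_Iic_add_Ioi (b := (0:ℝ)) int1.integrableOn int1.integrableOn, I1, K1b]
  ring

lemma J2 : ∫ u : ℝ, u ^ 2 * stdNormalPDF u = 1 := by
  have h2 : ∫ u : ℝ, (u ^ 2 - 1) * stdNormalPDF u = 0 := by
    rw [← intervalIntegral.integral_Iic_add_Ioi (b := (0:ℝ)) int2.integrableOn int2.integrableOn, K2a, K2b]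
    ring
  have he : (fun u : ℝ => u ^ 2 * stdNormalPDF u)
      = fun u => (u ^ 2 - 1) * stdNormalPDF u + stdNormalPDF u := by
    funext u; ring
  rw [he, integral_add int2 integrable_pdf, h2, J0]
  ring

lemma J3 : ∫ u : ℝ, u ^ 3 * stdNormalPDF u = 0 := by
  rw [← intervalIntegral.integral_Iic_add_Ioi (b := (0:ℝ)) (integrable_pow_pdf 3).integrableOn
    (integrable_pow_pdf 3).integrableOn, I3, K3b]
  ring

lemma J4 : ∫ u : ℝ, u ^ 4 * stdNormalPDF u = 3 := by
  have h4 : ∫ u : ℝ, (u ^ 4 - 3) * stdNormalPDF u = 0 := by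
    rw [← intervalIntegral.integral_Iic_add_Ioi (b := (0:ℝ)) int4.integrableOn int4.integrableOn, K4a, K4b]
    ring
  have he : (fun u : ℝ => u ^ 4 * stdNormalPDF u)
      = fun u => (u ^ 4 - 3) * stdNormalPDF u + 3 * stdNormalPDF u := by
    funext u; ring
  rw [he, integral_add int4 (integrable_pdf.const_mul 3), h4, integral_const_mul _ _, J0]
  ring

/-! Integrals of polynomials against the density -/

lemma integrable_poly (a0 a1 a2 a3 a4 : ℝ) :
    Integrable (fun u : ℝ =>
      (a0 + a1 * u + a2 * u ^ 2 + a3 * u ^ 3 + a4 * u ^ 4) * stdNormalPDF u) := by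
  have he : (fun u : ℝ => (a0 + a1 * u + a2 * u ^ 2 + a3 * u ^ 3 + a4 * u ^ 4) * stdNormalPDF u)
      = fun u => a0 * stdNormalPDF u + (a1 * (u * stdNormalPDF u)
        + (a2 * (u ^ 2 * stdNormalPDF u) + (a3 * (u ^ 3 * stdNormalPDF u)
          + a4 * (u ^ 4 * stdNormalPDF u)))) := by
    funext u; ring
  rw [he]
  exact (integrable_pdf.const_mul a0).add ((int1.const_mul a1).add
    (((integrable_pow_pdf 2).const_mul a2).add (((integrable_pow_pdf 3).const_mul a3).add
      ((integrable_pow_pdf 4).const_mul a4))))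

lemma integral_poly (s : Set ℝ) (a0 a1 a2 a3 a4 : ℝ) :
    ∫ u in s, (a0 + a1 * u + a2 * u ^ 2 + a3 * u ^ 3 + a4 * u ^ 4) * stdNormalPDF u
      = a0 * (∫ u in s, stdNormalPDF u) + a1 * (∫ u in s, u * stdNormalPDF u)
        + a2 * (∫ u in s, u ^ 2 * stdNormalPDF u) + a3 * (∫ u in s, u ^ 3 * stdNormalPDF u)
        + a4 * (∫ u in s, u ^ 4 * stdNormalPDF u) := by
  have he : (fun u : ℝ => (a0 + a1 * u + a2 * u ^ 2 + a3 * u ^ 3 + a4 * u ^ 4) * stdNormalPDF u)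
      = fun u => a0 * stdNormalPDF u + (a1 * (u * stdNormalPDF u)
        + (a2 * (u ^ 2 * stdNormalPDF u) + (a3 * (u ^ 3 * stdNormalPDF u)
          + a4 * (u ^ 4 * stdNormalPDF u)))) := by
    funext u; ring
  have g0 : Integrable (fun u : ℝ => a0 * stdNormalPDF u) := integrable_pdf.const_mul a0
  have g1 : Integrable (fun u : ℝ => a1 * (u * stdNormalPDF u)) := int1.const_mul a1
  have g2 : Integrable (fun u : ℝ => a2 * (u ^ 2 * stdNormalPDF u)) :=
    (integrable_pow_pdf 2).const_mul a2
  have g3 : Integrable (fun u : ℝ => a3 * (u ^ 3 * stdNormalPDF u)) :=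
    (integrable_pow_pdf 3).const_mul a3
  have g4 : Integrable (fun u : ℝ => a4 * (u ^ 4 * stdNormalPDF u)) :=
    (integrable_pow_pdf 4).const_mul a4
  have g34 : Integrable (fun u : ℝ => a3 * (u ^ 3 * stdNormalPDF u)
      + a4 * (u ^ 4 * stdNormalPDF u)) := g3.add g4
  have g234 : Integrable (fun u : ℝ => a2 * (u ^ 2 * stdNormalPDF u)
      + (a3 * (u ^ 3 * stdNormalPDF u) + a4 * (u ^ 4 * stdNormalPDF u))) := g2.add g34
  have g1234 : Integrable (fun u : ℝ => a1 * (u * stdNormalPDF u)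
      + (a2 * (u ^ 2 * stdNormalPDF u)
        + (a3 * (u ^ 3 * stdNormalPDF u) + a4 * (u ^ 4 * stdNormalPDF u)))) := g1.add g234
  rw [he]
  rw [integral_add g0.integrableOn g1234.integrableOn,
    integral_add g1.integrableOn g234.integrableOn,
    integral_add g2.integrableOn g34.integrableOn,
    integral_add g3.integrableOn g4.integrableOn,
    integral_const_mul _ _, integral_const_mul _ _, integral_const_mul _ _, integral_const_mul _ _,
    integral_const_mul _ _]
  ring

/-! The key inequality -/

lemma key (x : ℝ) :
    0 ≤ stdNormalCDF x * (1 - stdNormalCDF x) - stdNormalPDF x ^ 2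
        - (1/2) * (x * stdNormalPDF x) ^ 2 := by
  set P := stdNormalCDF x with hP
  set p := stdNormalPDF x with hp
  have sq_expand : ∀ (k b u : ℝ), (k + p * u + b * u ^ 2) ^ 2 * stdNormalPDF u
      = (k ^ 2 + (2 * k * p) * u + (p ^ 2 + 2 * k * b) * u ^ 2 + (2 * p * b) * u ^ 3
          + b ^ 2 * u ^ 4) * stdNormalPDF u := fun k b u => by ring
  have hint : ∀ k b : ℝ, Integrable (fun u : ℝ => (k + p * u + b * u ^ 2) ^ 2 * stdNormalPDF u) := by
    intro k b
    refine (integrable_poly (k ^ 2) (2 * k * p) (p ^ 2 + 2 * k * b) (2 * p * b) (b ^ 2)).congr ?_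
    exact ae_of_all _ fun u => (sq_expand k b u).symm
  have A : ∀ k b : ℝ, ∫ u in Iic x, (k + p * u + b * u ^ 2) ^ 2 * stdNormalPDF u
      = k ^ 2 * P + (2 * k * p) * (-p) + (p ^ 2 + 2 * k * b) * (P - x * p)
        + (2 * p * b) * (-((x ^ 2 + 2) * p)) + b ^ 2 * (3 * P - (x ^ 3 + 3 * x) * p) := by
    intro k b
    simp_rw [sq_expand k b]
    rw [integral_poly, I0, I1, I2, I3, I4]
  have B : ∀ k b : ℝ, ∫ u : ℝ, (k + p * u + b * u ^ 2) ^ 2 * stdNormalPDF u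
      = k ^ 2 + (p ^ 2 + 2 * k * b) + b ^ 2 * 3 := by
    intro k b
    simp_rw [sq_expand k b]
    rw [← setIntegral_univ, integral_poly, setIntegral_univ, setIntegral_univ, setIntegral_univ,
      setIntegral_univ, setIntegral_univ, J0, J1, J2, J3, J4]
    ring
  set b : ℝ := x * p / 2 with hb
  have h1 : 0 ≤ ∫ u in Iic x, ((1 - P - b) + p * u + b * u ^ 2) ^ 2 * stdNormalPDF u :=
    setIntegral_nonneg measurableSet_Iic fun u _ => mul_nonneg (sq_nonneg _) (pdf_nonneg u)
  have h2 : 0 ≤ ∫ u in Ioi x, ((-P - b) + p * u + b * u ^ 2) ^ 2 * stdNormalPDF u :=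
    setIntegral_nonneg measurableSet_Ioi fun u _ => mul_nonneg (sq_nonneg _) (pdf_nonneg u)
  have h3 := intervalIntegral.integral_Iic_add_Ioi (b := x) (hint (-P - b) b).integrableOn
    (hint (-P - b) b).integrableOn
  rw [A (1 - P - b) b] at h1
  rw [A (-P - b) b, B (-P - b) b] at h3
  rw [hb] at h1 h3
  nlinarith [h1, h2, h3]

/-! CDF: continuity, limits, surjectivity onto `(0,1)` -/

lemma cdf_sub (x : ℝ) :
    stdNormalCDF x = stdNormalCDF 0 + ∫ u in (0:ℝ)..x, stdNormalPDF u := by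
  rw [← intervalIntegral.integral_Iic_sub_Iic integrable_pdf.integrableOn integrable_pdf.integrableOn,
    I0, I0]
  ring

lemma continuous_cdf : Continuous stdNormalCDF := by
  have h := integrable_pdf.continuous_primitive 0
  have he : stdNormalCDF = fun x => stdNormalCDF 0 + ∫ u in (0:ℝ)..x, stdNormalPDF u :=
    funext cdf_sub
  rw [he]
  exact continuous_const.add h

lemma monotone_cdf : Monotone stdNormalCDF := by
  intro a c hac
  exact ENNReal.toReal_mono (measure_ne_top _ _) (measure_mono (Iic_subset_Iic.2 hac))

lemma tendsto_cdf_atTop : Tendsto stdNormalCDF atTop (𝓝 1) := by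
  have h := intervalIntegral_tendsto_integral_Ioi (0:ℝ)
    (integrable_pdf.integrableOn) tendsto_id
  have h2 : Tendsto (fun x : ℝ => stdNormalCDF 0 + ∫ u in (0:ℝ)..x, stdNormalPDF u) atTop
      (𝓝 (stdNormalCDF 0 + ∫ u in Ioi (0:ℝ), stdNormalPDF u)) := tendsto_const_nhds.add h
  have hval : stdNormalCDF 0 + ∫ u in Ioi (0:ℝ), stdNormalPDF u = 1 := by
    rw [← I0, intervalIntegral.integral_Iic_add_Ioi integrable_pdf.integrableOn integrable_pdf.integrableOn, J0]
  rw [hval] at h2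
  exact h2.congr fun x => (cdf_sub x).symm

lemma tendsto_cdf_atBot : Tendsto stdNormalCDF atBot (𝓝 0) := by
  have h := intervalIntegral_tendsto_integral_Iic (0:ℝ)
    (integrable_pdf.integrableOn) tendsto_id
  have h2 : Tendsto (fun x : ℝ => stdNormalCDF 0 - ∫ u in x..(0:ℝ), stdNormalPDF u) atBot
      (𝓝 (stdNormalCDF 0 - ∫ u in Iic (0:ℝ), stdNormalPDF u)) := tendsto_const_nhds.sub h
  have hval : stdNormalCDF 0 - ∫ u in Iic (0:ℝ), stdNormalPDF u = 0 := by
    rw [I0]; ring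
  rw [hval] at h2
  refine h2.congr fun x => ?_
  rw [← intervalIntegral.integral_Iic_sub_Iic integrable_pdf.integrableOn integrable_pdf.integrableOn, I0, I0]
  ring

lemma cdf_surj {t : ℝ} (ht : t ∈ Ioo (0:ℝ) 1) : ∃ x, stdNormalCDF x = t := by
  obtain ⟨a, ha⟩ := (tendsto_cdf_atBot.eventually_lt_const ht.1).exists
  obtain ⟨c, hc⟩ := (tendsto_cdf_atTop.eventually_const_lt ht.2).exists
  have hle : min a c ≤ c := min_le_right a c
  have hsub := intermediate_value_Icc hle continuous_cdf.continuousOn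
  have htmem : t ∈ Icc (stdNormalCDF (min a c)) (stdNormalCDF c) :=
    ⟨((monotone_cdf (min_le_left a c)).trans ha.le), hc.le⟩
  obtain ⟨x, _, hx⟩ := hsub htmem
  exact ⟨x, hx⟩

lemma quantile_cdf {t : ℝ} (ht : t ∈ Ioo (0:ℝ) 1) :
    stdNormalCDF (stdNormalQuantile t) = t :=
  Function.invFun_eq (cdf_surj ht)

end DurbinAux

/-- the covariance function `C` is symmetric, and on the diagonal
`C(t,t) = t(1-t) - φ(Φ⁻¹(t))² - (1/2)(Φ⁻¹(t) φ(Φ⁻¹(t)))² ≥ 0` for `t ∈ (0,1)`. -/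
theorem statement11 :
    (∀ s t : ℝ, s ∈ Set.Ioo (0:ℝ) 1 → t ∈ Set.Ioo (0:ℝ) 1 → durbinCov s t = durbinCov t s) ∧
    (∀ t : ℝ, t ∈ Set.Ioo (0:ℝ) 1 →
      durbinCov t t = t * (1 - t) - stdNormalPDF (stdNormalQuantile t) ^ 2 -
        (1 / 2) * (stdNormalQuantile t * stdNormalPDF (stdNormalQuantile t)) ^ 2 ∧
      0 ≤ durbinCov t t) := by
  constructor
  · intro s t _ _
    unfold durbinCov
    rw [min_comm]
    ring
  · intro t ht
    have hdiag : durbinCov t t = t * (1 - t) - stdNormalPDF (stdNormalQuantile t) ^ 2 -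
        (1 / 2) * (stdNormalQuantile t * stdNormalPDF (stdNormalQuantile t)) ^ 2 := by
      unfold durbinCov
      rw [min_self]
      ring
    refine ⟨hdiag, ?_⟩
    rw [hdiag]
    have h := DurbinAux.key (stdNormalQuantile t)
    rw [DurbinAux.quantile_cdf ht] at h
    nlinarith [h]
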